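/- arXiv:2404.17456 — 6 statements merged into one kernel-verified Lean document; each statement's English description precedes it below -/
import Mathlib

section
/- Let θ > 0, let z ∈ ℝ be a constant input, let T ≥ 1, and let an integrate-and-fire neuron evolve by u(t) = v(t-1) + z, s(t) = 1 if u(t) ≥ θ and s(t) = 0 otherwise, and v(t) = u(t) - θ·s(t), for t = 1, …, T, from an initial membrane potential v(0). If the residual membrane potential satisfies 0 ≤ v(T) < θ, then the total spike count equals ∑_{t=1}^{T} s(t) = ⌊(z·T + v(0))/θ⌋, and moreover 0 ≤ ⌊(z·T + v(0))/θ⌋ ≤ T. -/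
/-- For an IF neuron with reset-by-subtraction, threshold `θ > 0`, constant per-step
input `z`, if the residual potential satisfies `0 ≤ v T < θ` then the total spike
count over `T` steps equals `⌊(z*T + v 0)/θ⌋`, which lies in `[0, T]`. -/
theorem if_neuron_spike_count (θ z : ℝ) (hθ : 0 < θ) (T : ℕ) (hT : 1 ≤ T)
    (u s v : ℕ → ℝ)
    (hu : ∀ t : ℕ, 1 ≤ t → u t = v (t - 1) + z)
    (hs : ∀ t : ℕ, 1 ≤ t → s t = if θ ≤ u t then 1 else 0)
    (hv : ∀ t : ℕ, 1 ≤ t → v t = u t - θ * s t)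
    (hres : 0 ≤ v T ∧ v T < θ) :
    (∑ t ∈ Finset.Icc 1 T, s t) = ((⌊(z * T + v 0) / θ⌋ : ℤ) : ℝ) ∧
    0 ≤ ⌊(z * T + v 0) / θ⌋ ∧ ⌊(z * T + v 0) / θ⌋ ≤ (T : ℤ) := by
  -- telescoping: v n = v 0 + n*z - θ * ∑
  have htel : ∀ n : ℕ, v n = v 0 + n * z - θ * ∑ t ∈ Finset.Icc 1 n, s t := by
    intro n
    induction n with
    | zero => simp
    | succ n ih =>
      have h1 : 1 ≤ n + 1 := Nat.le_add_left 1 n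
      rw [hv (n+1) h1, hu (n+1) h1]
      simp only [Nat.add_sub_cancel]
      rw [ih, Finset.sum_Icc_succ_top h1]
      push_cast
      ring
  -- the sum is a count of 0/1 values
  set S : ℝ := ∑ t ∈ Finset.Icc 1 T, s t with hS
  set F := (Finset.Icc 1 T).filter (fun t => θ ≤ u t) with hF
  have hsum : S = (F.card : ℝ) := by
    rw [hS, hF]
    rw [Finset.card_filter]
    push_cast
    apply Finset.sum_congr rfl
    intro t ht
    rw [hs t (Finset.mem_Icc.mp ht).1]
  have hcard : F.card ≤ T := by
    calc F.card ≤ (Finset.Icc 1 T).card := Finset.card_filter_le _ _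
    _ = T := by rw [Nat.card_Icc]; omega
  have hval : z * T + v 0 = θ * S + v T := by
    rw [htel T]; ring
  have hfloor : ⌊(z * T + v 0) / θ⌋ = (F.card : ℤ) := by
    rw [Int.floor_eq_iff]
    constructor
    · rw [hval, le_div_iff₀ hθ]
      push_cast
      rw [← hsum]
      nlinarith [hres.1]
    · rw [hval, div_lt_iff₀ hθ]
      push_cast
      rw [← hsum]
      nlinarith [hres.2]
  refine ⟨?_, ?_, ?_⟩
  · rw [hfloor, hsum]; push_cast; ring
  · rw [hfloor]; exact Int.natCast_nonneg _
  · rw [hfloor]; exact_mod_cast hcard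
end

section
/- Let θ > 0, let z ∈ ℝ, let T ≥ 1, and let an integrate-and-fire neuron with threshold θ, constant per-step input z, and initial potential v(0) evolve by u(t) = v(t-1) + z, s(t) = 1 if u(t) ≥ θ else 0, v(t) = u(t) - θ·s(t). If 0 ≤ v(T) < θ, then the average postsynaptic potential satisfies φ(T) = (θ/T)·∑_{t=1}^{T} s(t) = θ·clip((1/T)·⌊(z·T + v(0))/θ⌋, 0, 1), where clip(x,0,1) = min(1, max(0, x)). -/
/-- For an IF neuron with reset-by-subtraction, threshold `θ > 0`, constant per-step
input `z`, if `0 ≤ v T < θ` then the average postsynaptic potential equals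
`θ * clip((1/T) * ⌊(z*T + v 0)/θ⌋, 0, 1)`, where `clip(x,0,1) = min 1 (max 0 x)`. -/
theorem if_neuron_avg_potential_clip_floor (θ z : ℝ) (hθ : 0 < θ) (T : ℕ) (hT : 1 ≤ T)
    (u s v : ℕ → ℝ)
    (hu : ∀ t : ℕ, 1 ≤ t → u t = v (t - 1) + z)
    (hs : ∀ t : ℕ, 1 ≤ t → s t = if θ ≤ u t then 1 else 0)
    (hv : ∀ t : ℕ, 1 ≤ t → v t = u t - θ * s t)
    (hres : 0 ≤ v T ∧ v T < θ) :
    (θ / (T : ℝ)) * ∑ t ∈ Finset.Icc 1 T, s t =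
      θ * min 1 (max 0 ((1 / (T : ℝ)) * ((⌊(z * T + v 0) / θ⌋ : ℤ) : ℝ))) := by
  -- telescoping identity
  have tel : ∀ n : ℕ, v n = v 0 + n * z - θ * ∑ t ∈ Finset.Icc 1 n, s t := by
    intro n
    induction n with
    | zero => simp
    | succ n ih =>
      rw [Finset.sum_Icc_succ_top (by omega : 1 ≤ n + 1)]
      have h1 := hv (n + 1) (by omega)
      have h2 := hu (n + 1) (by omega)
      simp only [Nat.add_sub_cancel] at h2
      rw [h1, h2, ih]
      push_cast
      ring
  -- the sum is a natural number
  set N : ℕ := ((Finset.Icc 1 T).filter (fun t => θ ≤ u t)).card with hN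
  have hsum : ∑ t ∈ Finset.Icc 1 T, s t = (N : ℝ) := by
    rw [show ∑ t ∈ Finset.Icc 1 T, s t
        = ∑ t ∈ Finset.Icc 1 T, (if θ ≤ u t then (1:ℝ) else 0) from
      Finset.sum_congr rfl (fun t ht => hs t (Finset.mem_Icc.mp ht).1)]
    rw [Finset.sum_boole]
  have hNT : N ≤ T := by
    calc N ≤ (Finset.Icc 1 T).card := Finset.card_filter_le _ _
    _ = T := by rw [Nat.card_Icc]; omega
  have hvT := tel T
  rw [hsum] at hvT
  -- floor equals N
  have hfloor : (⌊(z * T + v 0) / θ⌋ : ℤ) = (N : ℤ) := by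
    rw [Int.floor_eq_iff]
    constructor
    · rw [Int.cast_natCast, le_div_iff₀ hθ]
      nlinarith [hres.1]
    · rw [Int.cast_natCast, div_lt_iff₀ hθ]
      nlinarith [hres.2]
  rw [hsum, hfloor]
  have hT0 : (0:ℝ) < T := by exact_mod_cast hT
  have hmax : max 0 ((1 / (T : ℝ)) * ((N : ℤ) : ℝ)) = (1 / (T : ℝ)) * N := by
    push_cast
    rw [max_eq_right]
    exact mul_nonneg (le_of_lt (one_div_pos.mpr hT0)) (Nat.cast_nonneg _)
  rw [hmax]
  have hmin : min 1 ((1 / (T : ℝ)) * (N : ℝ)) = (1 / (T : ℝ)) * N := by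
    rw [min_eq_right]
    rw [one_div, inv_mul_le_iff₀ hT0, mul_one]
    exact_mod_cast hNT
  rw [hmin]
  field_simp
end

section
/- Let θ > 0, let z ∈ ℝ, let T ≥ 1, and let an integrate-and-fire neuron with threshold θ, constant per-step input z, and initial potential v(0) = θ/2 evolve by u(t) = v(t-1) + z, s(t) = 1 if u(t) ≥ θ else 0, v(t) = u(t) - θ·s(t). If 0 ≤ v(T) < θ, then the average postsynaptic potential equals the quantization-clip-floor-shift activation of the source ANN with quantization step L = T and trained threshold λ = θ; that is, (θ/T)·∑_{t=1}^{T} s(t) = θ·clip((1/T)·⌊z·T/θ + 1/2⌋, 0, 1). In particular, under these conditions the conversion error between the ANN activation and the SNN average postsynaptic potential is exactly zero. -/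
/-- For an IF neuron with reset-by-subtraction, threshold `θ > 0`, constant per-step
input `z`, and initial potential `v 0 = θ/2`, if `0 ≤ v T < θ` then the average
postsynaptic potential equals the QCFS activation with `L = T` and `λ = θ`:
`θ * clip((1/T) * ⌊z*T/θ + 1/2⌋, 0, 1)`; i.e. the conversion error is exactly zero. -/
theorem if_neuron_matches_qcfs (θ z : ℝ) (hθ : 0 < θ) (T : ℕ) (hT : 1 ≤ T)
    (u s v : ℕ → ℝ) (hv0 : v 0 = θ / 2)
    (hu : ∀ t : ℕ, 1 ≤ t → u t = v (t - 1) + z)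
    (hs : ∀ t : ℕ, 1 ≤ t → s t = if θ ≤ u t then 1 else 0)
    (hv : ∀ t : ℕ, 1 ≤ t → v t = u t - θ * s t)
    (hres : 0 ≤ v T ∧ v T < θ) :
    (θ / (T : ℝ)) * ∑ t ∈ Finset.Icc 1 T, s t =
      θ * min 1 (max 0 ((1 / (T : ℝ)) * ((⌊z * T / θ + 1 / 2⌋ : ℤ) : ℝ))) := by
  -- sum of spikes equals a natural number k
  set k : ℕ := ((Finset.Icc 1 T).filter (fun t => θ ≤ u t)).card with hk
  have hsum : ∑ t ∈ Finset.Icc 1 T, s t = (k : ℝ) := by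
    rw [hk]
    rw [← Finset.sum_boole]
    apply Finset.sum_congr rfl
    intro t ht
    exact hs t (Finset.mem_Icc.mp ht).1
  have hkT : k ≤ T := by
    calc k ≤ (Finset.Icc 1 T).card := Finset.card_filter_le _ _
    _ = T := by rw [Nat.card_Icc]; omega
  -- dynamics
  have hvn : ∀ n : ℕ, v n = θ / 2 + n * z - θ * ∑ t ∈ Finset.Icc 1 n, s t := by
    intro n
    induction n with
    | zero => simp [hv0]
    | succ n ih =>
      have h1 : 1 ≤ n + 1 := by omega
      rw [hv (n+1) h1, hu (n+1) h1]
      simp only [Nat.add_sub_cancel]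
      rw [Finset.sum_Icc_succ_top h1, ih]
      push_cast
      ring
  have hvT := hvn T
  rw [hsum] at hvT
  obtain ⟨h0, h1⟩ := hres
  rw [hvT] at h0 h1
  -- floor equals k
  have hfloor : (⌊z * T / θ + 1 / 2⌋ : ℤ) = (k : ℤ) := by
    apply Int.floor_eq_iff.mpr
    constructor
    · push_cast
      rw [div_add' _ _ _ (ne_of_gt hθ), le_div_iff₀ hθ]
      nlinarith
    · push_cast
      rw [div_add' _ _ _ (ne_of_gt hθ), div_lt_iff₀ hθ]
      nlinarith
  rw [hfloor, hsum]
  have hT' : (0:ℝ) < T := by exact_mod_cast hT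
  have hmax : max 0 ((1 / (T : ℝ)) * ((k:ℤ):ℝ)) = (1 / (T : ℝ)) * k := by
    push_cast
    rw [max_eq_right]
    positivity
  rw [hmax]
  have hmin : min 1 ((1 / (T : ℝ)) * (k:ℝ)) = (1 / (T : ℝ)) * k := by
    rw [min_eq_right]
    rw [div_mul_eq_mul_div, div_le_one hT', one_mul]
    exact_mod_cast hkT
  rw [hmin]
  field_simp
end

section
/- Let λ > 0 and let T ≥ 1 be a natural number. If z is a random variable uniformly distributed on the interval [0, λ], then the expectation of the clip-floor-shift quantized activation equals λ/2; that is, ∫ λ·clip((1/T)·⌊z·T/λ + 1/2⌋, 0, 1) dμ(z) = λ/2, where μ is the uniform probability measure on [0, λ]. In particular this expectation does not depend on T. -/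
open MeasureTheory

/-- For `z` uniform on `[0, λ]`, the expectation of the clip-floor-shift quantized
activation `λ * clip((1/T) * ⌊z*T/λ + 1/2⌋, 0, 1)` equals `λ/2`, independently of `T`. -/
theorem qcfs_expectation_eq_half (lam : ℝ) (hlam : 0 < lam) (T : ℕ) (hT : 1 ≤ T) :
    ∫ z, lam * min 1 (max 0 ((1 / (T : ℝ)) * ((⌊z * T / lam + 1 / 2⌋ : ℤ) : ℝ)))
      ∂((ENNReal.ofReal lam)⁻¹ • volume.restrict (Set.Icc (0 : ℝ) lam)) = lam / 2 := by
  have hTpos : (0:ℝ) < T := by exact_mod_cast hT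
  set F : ℝ → ℝ := fun z =>
    lam * min 1 (max 0 ((1 / (T : ℝ)) * ((⌊z * T / lam + 1 / 2⌋ : ℤ) : ℝ))) with hFdef
  -- measurability
  have hmeas : Measurable F := by
    refine measurable_const.mul (Measurable.min measurable_const (Measurable.max measurable_const (measurable_const.mul ?_)))
    exact Measurable.comp (measurable_from_top (f := (Int.cast : ℤ → ℝ))) (Measurable.floor (((measurable_id.mul_const _).div_const _).add_const _))
  -- pointwise bounds
  have hF01 : ∀ z, 0 ≤ F z ∧ F z ≤ lam := by
    intro z
    have h1 : (0:ℝ) ≤ min 1 (max 0 ((1 / (T : ℝ)) * ((⌊z * T / lam + 1 / 2⌋ : ℤ) : ℝ))) :=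
      le_min zero_le_one (le_max_left _ _)
    have h2 : min 1 (max 0 ((1 / (T : ℝ)) * ((⌊z * T / lam + 1 / 2⌋ : ℤ) : ℝ))) ≤ 1 :=
      min_le_left _ _
    constructor
    · exact mul_nonneg hlam.le h1
    · calc F z ≤ lam * 1 := mul_le_mul_of_nonneg_left h2 hlam.le
        _ = lam := mul_one lam
  -- integrability helper
  have hbdd : ∀ G : ℝ → ℝ, Measurable G → (∀ z, 0 ≤ G z ∧ G z ≤ lam) →
      IntegrableOn G (Set.Icc (0:ℝ) lam) := by
    intro G hG hb
    refine Integrable.mono' (integrable_const lam) hG.aestronglyMeasurable ?_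
    filter_upwards with z
    rw [Real.norm_eq_abs, abs_of_nonneg (hb z).1]
    exact (hb z).2
  have hint : IntegrableOn F (Set.Icc (0:ℝ) lam) := hbdd F hmeas hF01
  have hmeas2 : Measurable (fun z => F (lam - z)) := hmeas.comp (measurable_const.sub measurable_id)
  have hint2 : IntegrableOn (fun z => F (lam - z)) (Set.Icc (0:ℝ) lam) :=
    hbdd _ hmeas2 (fun z => hF01 _)
  have hII : IntervalIntegrable F volume 0 lam :=
    IntegrableOn.intervalIntegrable (by rwa [Set.uIcc_of_le hlam.le])
  have hII2 : IntervalIntegrable (fun z => F (lam - z)) volume 0 lam :=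
    IntegrableOn.intervalIntegrable (by rwa [Set.uIcc_of_le hlam.le])
  -- the countable exceptional set
  set S : Set ℝ := Set.range (fun k : ℤ => ((k : ℝ) - 1/2) * lam / T) with hSdef
  have hSnull : volume S = 0 := (Set.countable_range _).measure_zero _
  -- key pointwise identity
  have hkey : ∀ x ∈ Set.Ioc (0:ℝ) lam, x ∉ S → F x + F (lam - x) = lam := by
    intro x hx hxS
    set u : ℝ := x * T / lam with hu
    have hu0 : 0 < u := div_pos (mul_pos hx.1 hTpos) hlam
    have huT : u ≤ T := by
      rw [hu, div_le_iff₀ hlam]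
      calc x * T ≤ lam * T := by nlinarith [hx.2]
        _ = T * lam := mul_comm _ _
    set k : ℤ := ⌊u + 1/2⌋ with hk
    have hk0 : 0 ≤ k := Int.floor_nonneg.2 (by positivity)
    have hkT : k ≤ T := by
      have h1 : (k:ℝ) ≤ u + 1/2 := Int.floor_le _
      have : (k:ℝ) < (T:ℝ) + 1 := by linarith
      exact_mod_cast Int.lt_add_one_iff.mp (by exact_mod_cast this)
    have hne : (k:ℝ) ≠ u + 1/2 := by
      intro h
      apply hxS
      refine ⟨k, ?_⟩
      have hx' : u = (k:ℝ) - 1/2 := by linarith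
      rw [hu] at hx'
      field_simp at hx' ⊢
      linarith [hx']
    have hklt : (k:ℝ) < u + 1/2 := lt_of_le_of_ne (Int.floor_le _) hne
    have hkub : u + 1/2 < (k:ℝ) + 1 := Int.lt_floor_add_one _
    -- second floor
    have harg : (lam - x) * T / lam + 1/2 = (T:ℝ) - u + 1/2 := by
      rw [hu]; field_simp
    have hfloor2 : (⌊(lam - x) * T / lam + 1/2⌋ : ℤ) = (T:ℤ) - k := by
      rw [harg]
      rw [Int.floor_eq_iff]
      constructor
      · push_cast; linarith
      · push_cast; linarith
    -- first clip drops
    have hc1 : min 1 (max 0 ((1 / (T : ℝ)) * (k : ℝ))) = (k:ℝ) / T := by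
      have h0 : (0:ℝ) ≤ (1 / (T : ℝ)) * (k : ℝ) := by
        apply mul_nonneg (by positivity); exact_mod_cast hk0
      have h1 : (1 / (T : ℝ)) * (k : ℝ) ≤ 1 := by
        rw [one_div, inv_mul_le_iff₀ hTpos, mul_one]; exact_mod_cast hkT
      rw [max_eq_right h0, min_eq_right h1, one_div, inv_mul_eq_div]
    have hc2 : min 1 (max 0 ((1 / (T : ℝ)) * (((T:ℤ) - k : ℤ) : ℝ))) = ((T:ℝ) - k) / T := by
      have h0 : (0:ℝ) ≤ (1 / (T : ℝ)) * (((T:ℤ) - k : ℤ) : ℝ) := by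
        apply mul_nonneg (by positivity)
        push_cast
        have : (k:ℝ) ≤ T := by exact_mod_cast hkT
        linarith
      have h1 : (1 / (T : ℝ)) * (((T:ℤ) - k : ℤ) : ℝ) ≤ 1 := by
        rw [one_div, inv_mul_le_iff₀ hTpos, mul_one]
        push_cast
        have : (0:ℝ) ≤ k := by exact_mod_cast hk0
        linarith
      rw [max_eq_right h0, min_eq_right h1, one_div, inv_mul_eq_div]
      push_cast; ring
    simp only [hFdef]
    rw [← hu] at *
    rw [show x * ↑T / lam + 1 / 2 = u + 1/2 from rfl, ← hk, hfloor2, hc1, hc2]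
    field_simp
    ring
  -- symmetry of the interval integral
  have hsym : (∫ z in (0:ℝ)..lam, F (lam - z)) = ∫ z in (0:ℝ)..lam, F z := by
    rw [intervalIntegral.integral_comp_sub_left F lam]
    norm_num
  have hsum : (∫ z in (0:ℝ)..lam, F z) + (∫ z in (0:ℝ)..lam, F z) = lam * lam := by
    have hc : (∫ z in (0:ℝ)..lam, (F z + F (lam - z))) = lam * lam := by
      have hcong : (∫ z in (0:ℝ)..lam, (F z + F (lam - z))) = ∫ _z in (0:ℝ)..lam, lam := by
        apply intervalIntegral.integral_congr_ae
        have hae : ∀ᵐ x : ℝ, x ∉ S := by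
          rw [MeasureTheory.ae_iff]
          simpa using hSnull
        filter_upwards [hae] with x hxS hxI
        have hx : x ∈ Set.Ioc 0 lam := by rwa [Set.uIoc_of_le hlam.le] at hxI
        exact hkey x hx hxS
      rw [hcong, intervalIntegral.integral_const, smul_eq_mul]
      ring
    rw [intervalIntegral.integral_add hII hII2, hsym] at hc
    exact hc
  have hI : (∫ z in (0:ℝ)..lam, F z) = lam * lam / 2 := by linarith
  rw [integral_smul_measure]
  have hset : (∫ z in Set.Icc (0:ℝ) lam, F z) = ∫ z in (0:ℝ)..lam, F z := by
    rw [intervalIntegral.integral_of_le hlam.le, MeasureTheory.integral_Icc_eq_integral_Ioc]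
  show (ENNReal.ofReal lam)⁻¹.toReal • (∫ z in Set.Icc (0:ℝ) lam, F z) = lam / 2
  rw [hset, hI, ENNReal.toReal_inv, ENNReal.toReal_ofReal hlam.le, smul_eq_mul]
  field_simp
end

section
/- Let λ > 0 and let T ≥ 1 and L ≥ 1 be natural numbers. If z is a random variable uniformly distributed on [0, λ], then the expected difference between the clip-floor-shift quantized activations at steps T and L is zero: ∫ (λ·clip((1/T)·⌊z·T/λ + 1/2⌋, 0, 1) - λ·clip((1/L)·⌊z·L/λ + 1/2⌋, 0, 1)) dμ(z) = 0, where μ is the uniform probability measure on [0, λ]. That is, the quantization error caused by a mismatch T ≠ L vanishes in expectation. -/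
open MeasureTheory

/-- The clip-floor-shift quantized activation. -/
private noncomputable def qF (lam : ℝ) (T : ℕ) (z : ℝ) : ℝ :=
  lam * min 1 (max 0 ((1 / (T : ℝ)) * ((⌊z * T / lam + 1 / 2⌋ : ℤ) : ℝ)))

private lemma qF_measurable (lam : ℝ) (T : ℕ) : Measurable (qF lam T) := by
  unfold qF
  apply Measurable.const_mul
  apply Measurable.min measurable_const
  apply Measurable.max measurable_const
  apply Measurable.const_mul
  have h1 : Measurable fun z : ℝ => z * (T : ℝ) / lam + 1 / 2 := by fun_prop
  exact Measurable.comp (by measurability) (Int.measurable_floor.comp h1)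

private lemma qF_bound (lam : ℝ) (hlam : 0 < lam) (T : ℕ) (z : ℝ) : ‖qF lam T z‖ ≤ lam := by
  unfold qF
  rw [Real.norm_eq_abs, abs_mul, abs_of_pos hlam]
  have h1 : min 1 (max 0 ((1 / (T : ℝ)) * ((⌊z * T / lam + 1 / 2⌋ : ℤ) : ℝ))) ≤ 1 :=
    min_le_left _ _
  have h0 : 0 ≤ min 1 (max 0 ((1 / (T : ℝ)) * ((⌊z * T / lam + 1 / 2⌋ : ℤ) : ℝ))) :=
    le_min zero_le_one (le_max_left _ _)
  nlinarith [abs_of_nonneg h0]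

private lemma qF_integrable (lam : ℝ) (hlam : 0 < lam) (T : ℕ) :
    Integrable (qF lam T) (volume.restrict (Set.Icc (0 : ℝ) lam)) := by
  refine Integrable.mono' (integrable_const lam) ((qF_measurable lam T).aestronglyMeasurable)
    (Filter.Eventually.of_forall fun z => qF_bound lam hlam T z)

private lemma qF_intervalIntegrable (lam : ℝ) (hlam : 0 < lam) (T : ℕ) :
    IntervalIntegrable (qF lam T) volume 0 lam := by
  rw [intervalIntegrable_iff_integrableOn_Ioc_of_le hlam.le]
  exact ((qF_integrable lam hlam T).mono_measure
    (Measure.restrict_mono Set.Ioc_subset_Icc_self le_rfl))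

/-- Reflection identity: away from a null set, `qF lam T (lam - z) = lam - qF lam T z`. -/
private lemma qF_reflect (lam : ℝ) (hlam : 0 < lam) (T : ℕ) (hT : 1 ≤ T) (z : ℝ)
    (hz : z ∈ Set.Ioc (0 : ℝ) lam) (hbad : ¬ ∃ n : ℤ, z * T / lam + 1 / 2 = (n : ℝ)) :
    qF lam T (lam - z) = lam - qF lam T z := by
  have hTpos : (0 : ℝ) < T := by exact_mod_cast hT
  have hlamne : lam ≠ 0 := hlam.ne'
  set u : ℝ := z * T / lam with hu
  have hupos : 0 < u := by
    apply div_pos (mul_pos hz.1 hTpos) hlam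
  have huT : u ≤ T := by
    rw [hu, div_le_iff₀ hlam]
    nlinarith [hz.2]
  set k : ℤ := ⌊u + 1 / 2⌋ with hk
  have hk0 : 0 ≤ k := Int.floor_nonneg.mpr (by linarith)
  have hkT : k ≤ T := by
    have : k < (T : ℤ) + 1 := by
      rw [hk, Int.floor_lt]
      push_cast
      linarith
    omega
  have hkreal : (0 : ℝ) ≤ (k : ℝ) ∧ (k : ℝ) ≤ T := by
    constructor <;> exact_mod_cast (by assumption)
  -- floor on the reflected point
  have hfloor_lt : (k : ℝ) ≤ u + 1 / 2 ∧ u + 1 / 2 < k + 1 := ⟨Int.floor_le _, Int.lt_floor_add_one _⟩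
  have hne : (k : ℝ) ≠ u + 1 / 2 := by
    intro h
    exact hbad ⟨k, h.symm⟩
  have hstrict : (k : ℝ) < u + 1 / 2 := lt_of_le_of_ne hfloor_lt.1 hne
  have harg : (lam - z) * T / lam + 1 / 2 = (T : ℝ) - u + 1 / 2 := by
    have : (lam - z) * T / lam = (T : ℝ) - u := by
      rw [hu]; field_simp
    linarith
  have hfloor2 : ⌊(lam - z) * T / lam + 1 / 2⌋ = (T : ℤ) - k := by
    rw [harg, Int.floor_eq_iff]
    constructor
    · push_cast
      linarith [hfloor_lt.2]
    · push_cast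
      linarith [hstrict]
  -- compute both sides
  have hmaxmin : ∀ m : ℤ, 0 ≤ m → m ≤ (T : ℤ) →
      min 1 (max 0 ((1 / (T : ℝ)) * (m : ℝ))) = (m : ℝ) / T := by
    intro m hm0 hmT
    have hm0' : (0 : ℝ) ≤ (m : ℝ) := by exact_mod_cast hm0
    have hmT' : (m : ℝ) ≤ T := by exact_mod_cast hmT
    have hle : (1 / (T : ℝ)) * (m : ℝ) ≤ 1 := by
      have h1 : (1 / (T : ℝ)) * (m : ℝ) ≤ (1 / (T : ℝ)) * T :=
        mul_le_mul_of_nonneg_left hmT' (by positivity)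
      have h2 : (1 / (T : ℝ)) * (T : ℝ) = 1 := by field_simp
      linarith
    rw [max_eq_right (by positivity), min_eq_right hle]
    ring
  have h1 : qF lam T z = lam * ((k : ℝ) / T) := by
    unfold qF
    rw [← hu, ← hk, hmaxmin k hk0 hkT]
  have h2 : qF lam T (lam - z) = lam * (((T : ℤ) - k : ℤ) : ℝ) / T := by
    unfold qF
    rw [hfloor2, hmaxmin ((T : ℤ) - k) (by omega) (by omega)]
    ring
  rw [h1, h2]
  push_cast
  field_simp

/-- The set of "bad" points is null. -/
private lemma badset_null (lam : ℝ) (hlam : 0 < lam) (T : ℕ) (hT : 1 ≤ T) :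
    volume {z : ℝ | ∃ n : ℤ, z * T / lam + 1 / 2 = (n : ℝ)} = 0 := by
  have hTpos : (0 : ℝ) < T := by exact_mod_cast hT
  have hsub : {z : ℝ | ∃ n : ℤ, z * T / lam + 1 / 2 = (n : ℝ)} ⊆
      Set.range (fun n : ℤ => ((n : ℝ) - 1 / 2) * lam / T) := by
    rintro z ⟨n, hn⟩
    refine ⟨n, ?_⟩
    field_simp
    field_simp at hn
    linarith
  exact measure_mono_null hsub ((Set.countable_range _).measure_zero _)

/-- Expectation of a single quantized activation over `[0, lam]` is `lam^2/2`. -/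
private lemma qF_integral (lam : ℝ) (hlam : 0 < lam) (T : ℕ) (hT : 1 ≤ T) :
    ∫ z in Set.Icc (0 : ℝ) lam, qF lam T z = lam ^ 2 / 2 := by
  have hIcc : ∫ z in Set.Icc (0 : ℝ) lam, qF lam T z = ∫ z in (0 : ℝ)..lam, qF lam T z := by
    rw [intervalIntegral.integral_of_le hlam.le, integral_Icc_eq_integral_Ioc]
  set I := ∫ z in (0 : ℝ)..lam, qF lam T z with hI
  have hrefl : ∫ z in (0 : ℝ)..lam, qF lam T (lam - z) = I := by
    have := intervalIntegral.integral_comp_sub_left (a := (0:ℝ)) (b := lam) (qF lam T) lam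
    rw [this, sub_self, sub_zero, hI]
  have hae : ∀ᵐ z ∂volume, z ∈ Set.uIoc (0 : ℝ) lam →
      qF lam T (lam - z) = lam - qF lam T z := by
    have hnull := badset_null lam hlam T hT
    filter_upwards [measure_eq_zero_iff_ae_notMem.mp hnull] with z hz hzmem
    rw [Set.uIoc_of_le hlam.le] at hzmem
    exact qF_reflect lam hlam T hT z hzmem hz
  have h2 : ∫ z in (0 : ℝ)..lam, qF lam T (lam - z)
      = ∫ z in (0 : ℝ)..lam, (lam - qF lam T z) := intervalIntegral.integral_congr_ae hae
  have h3 : ∫ z in (0 : ℝ)..lam, (lam - qF lam T z) = lam * lam - I := by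
    rw [intervalIntegral.integral_sub intervalIntegrable_const (qF_intervalIntegrable lam hlam T)]
    simp [mul_comm, hI]
  have heq : I = lam * lam - I := hrefl.symm.trans (h2.trans h3)
  rw [hIcc]
  change I = lam ^ 2 / 2
  nlinarith [heq]

/-- For `z` uniform on `[0, λ]`, the expected difference between the clip-floor-shift
quantized activations with steps `T` and `L` is zero. -/
theorem qcfs_step_mismatch_zero_expectation (lam : ℝ) (hlam : 0 < lam)
    (T L : ℕ) (hT : 1 ≤ T) (hL : 1 ≤ L) :
    ∫ z, (lam * min 1 (max 0 ((1 / (T : ℝ)) * ((⌊z * T / lam + 1 / 2⌋ : ℤ) : ℝ)))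
        - lam * min 1 (max 0 ((1 / (L : ℝ)) * ((⌊z * L / lam + 1 / 2⌋ : ℤ) : ℝ))))
      ∂((ENNReal.ofReal lam)⁻¹ • volume.restrict (Set.Icc (0 : ℝ) lam)) = 0 := by
  have key : ∫ z in Set.Icc (0 : ℝ) lam, (qF lam T z - qF lam L z) = 0 := by
    rw [integral_sub (qF_integrable lam hlam T) (qF_integrable lam hlam L),
      qF_integral lam hlam T hT, qF_integral lam hlam L hL]
    ring
  rw [integral_smul_measure]
  have : ∫ z, (qF lam T z - qF lam L z) ∂(volume.restrict (Set.Icc (0 : ℝ) lam)) = 0 := key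
  unfold qF at this
  rw [this]
  simp
end

section
/- Let θ > 0, let T ≥ 1 and L ≥ 1 be natural numbers, and let δ ∈ ℝ. Consider the product probability measure μ ⊗ γ on ℝ × ℝ, where μ is the uniform probability measure on [0, θ] and γ is the standard Gaussian measure on ℝ (mean 0, variance 1). Then the expected conversion error between the SNN's ideal average postsynaptic potential at T time steps and the Noisy Quantized (NQ) activation at quantization step L is zero: ∫ (θ·clip((1/T)·⌊z·T/θ + 1/2⌋, 0, 1) - θ·clip((1/L)·⌊z·L/θ + 1/2⌋, 0, 1) - δ·g) d(μ ⊗ γ)(z, g) = 0, for every δ and every T, L. -/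
open MeasureTheory ProbabilityTheory Set

noncomputable def Fq (θ : ℝ) (n : ℕ) (z : ℝ) : ℝ :=
  θ * min 1 (max 0 ((1 / (n : ℝ)) * ((⌊z * n / θ + 1 / 2⌋ : ℤ) : ℝ)))

lemma Fq_measurable (θ : ℝ) (n : ℕ) : Measurable (Fq θ n) := by
  unfold Fq
  have h1 : Measurable fun z : ℝ => ((⌊z * n / θ + 1 / 2⌋ : ℤ) : ℝ) :=
    measurable_from_top.comp (((measurable_id.mul_const _).div_const _).add_const _).floor
  exact (measurable_const.min (measurable_const.max (h1.const_mul _))).const_mul θ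

lemma Fq_bounds {θ : ℝ} (hθ : 0 < θ) (n : ℕ) (z : ℝ) : Fq θ n z ∈ Icc 0 θ := by
  unfold Fq
  constructor
  · have : (0:ℝ) ≤ min 1 (max 0 ((1 / (n : ℝ)) * ((⌊z * n / θ + 1 / 2⌋ : ℤ) : ℝ))) :=
      le_min zero_le_one (le_max_left _ _)
    positivity
  · have h1 : min 1 (max 0 ((1 / (n : ℝ)) * ((⌊z * n / θ + 1 / 2⌋ : ℤ) : ℝ))) ≤ 1 :=
      min_le_left _ _
    nlinarith

lemma Fq_add_reflect {θ : ℝ} (hθ : 0 < θ) {n : ℕ} (hn : 1 ≤ n) {z : ℝ}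
    (hz : z ∈ Icc 0 θ) (hns : ∀ m : ℤ, z * n / θ - 1/2 ≠ (m : ℝ)) :
    Fq θ n z + Fq θ n (θ - z) = θ := by
  have hn0 : (0:ℝ) < n := by exact_mod_cast Nat.lt_of_lt_of_le Nat.zero_lt_one hn
  set t : ℝ := z * n / θ with ht
  have ht0 : 0 ≤ t := div_nonneg (mul_nonneg hz.1 (Nat.cast_nonneg n)) hθ.le
  have ht1 : t ≤ n := by
    rw [ht, div_le_iff₀ hθ]
    nlinarith [hz.2]
  set k : ℤ := ⌊t + 1/2⌋ with hk
  have hk0 : 0 ≤ k := Int.floor_nonneg.2 (by linarith)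
  have hkn : k ≤ (n : ℤ) := by
    have : k < (n:ℤ) + 1 := Int.floor_lt.2 (by push_cast; linarith)
    omega
  have hfl : ⌊t - 1/2⌋ = k - 1 := by
    have h : t - 1/2 = (t + 1/2) - ((1:ℤ):ℝ) := by push_cast; ring
    rw [h, Int.floor_sub_intCast]
  have hne : ((k - 1 : ℤ) : ℝ) ≠ t - 1/2 := fun h => hns (k-1) (h.symm)
  have hle : ((k - 1 : ℤ) : ℝ) ≤ t - 1/2 := hfl ▸ Int.floor_le _
  have hlt : t - 1/2 < ((k - 1 : ℤ) : ℝ) + 1 := hfl ▸ Int.lt_floor_add_one _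
  have hneg : ⌊1/2 - t⌋ = -k := by
    rw [Int.floor_eq_iff]
    constructor
    · push_cast at hlt ⊢; linarith
    · push_cast at hle hne ⊢
      rcases lt_of_le_of_ne hle hne with h
      linarith
  have hrefl : ⌊(θ - z) * n / θ + 1/2⌋ = n - k := by
    have h : (θ - z) * n / θ + 1/2 = ((n:ℤ) : ℝ) + (1/2 - t) := by
      rw [ht]
      push_cast
      field_simp
      ring
    rw [h, Int.floor_intCast_add, hneg]
    omega
  unfold Fq
  rw [← ht, ← hk, hrefl]
  have hnn : (n:ℝ) ≠ 0 := hn0.ne'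
  have e1 : max 0 ((1 / (n:ℝ)) * ((k:ℤ):ℝ)) = (1/n) * k :=
    max_eq_right (by positivity)
  have e2 : min 1 ((1 / (n:ℝ)) * (k:ℝ)) = (1/n) * k := by
    refine min_eq_right ?_
    rw [one_div, inv_mul_le_iff₀ hn0, mul_one]
    exact_mod_cast hkn
  have hk0' : (0:ℝ) ≤ (k:ℝ) := by exact_mod_cast hk0
  have e3 : max 0 ((1 / (n:ℝ)) * (((n - k : ℤ)):ℝ)) = (1/n) * ((n:ℝ) - k) := by
    push_cast
    refine max_eq_right ?_
    have : (0:ℝ) ≤ (n:ℝ) - k := by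
      have : (k:ℝ) ≤ (n:ℝ) := by exact_mod_cast hkn
      linarith
    positivity
  have e4 : min 1 ((1 / (n:ℝ)) * ((n:ℝ) - k)) = (1/n) * ((n:ℝ) - k) := by
    refine min_eq_right ?_
    rw [one_div, inv_mul_le_iff₀ hn0, mul_one]
    linarith
  rw [e1, e2]
  push_cast
  push_cast at e3
  rw [e3, e4]
  field_simp
  ring

lemma Fq_integrable {θ : ℝ} (hθ : 0 < θ) (n : ℕ) (ν : Measure ℝ) [IsFiniteMeasure ν] :
    Integrable (Fq θ n) ν := by
  refine (integrable_const θ).mono' (Fq_measurable θ n).aestronglyMeasurable ?_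
  filter_upwards with z
  rw [Real.norm_eq_abs, abs_of_nonneg (Fq_bounds hθ n z).1]
  exact (Fq_bounds hθ n z).2

lemma Fq_reflect_integrable {θ : ℝ} (hθ : 0 < θ) (n : ℕ) (ν : Measure ℝ) [IsFiniteMeasure ν] :
    Integrable (fun z => Fq θ n (θ - z)) ν := by
  refine (integrable_const θ).mono'
    ((Fq_measurable θ n).comp (measurable_const.sub measurable_id)).aestronglyMeasurable ?_
  filter_upwards with z
  rw [Real.norm_eq_abs, abs_of_nonneg (Fq_bounds hθ n _).1]
  exact (Fq_bounds hθ n _).2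

lemma bad_set_null {θ : ℝ} (hθ : 0 < θ) {n : ℕ} (hn : 1 ≤ n) :
    ∀ᵐ z : ℝ ∂volume, ∀ m : ℤ, z * n / θ - 1/2 ≠ (m : ℝ) := by
  have hn0 : (0:ℝ) < n := by exact_mod_cast Nat.lt_of_lt_of_le Nat.zero_lt_one hn
  have hnull : volume (Set.range (fun m : ℤ => ((m:ℝ) + 1/2) * θ / n)) = 0 :=
    (Set.countable_range _).measure_zero _
  rw [ae_iff]
  refine measure_mono_null ?_ hnull
  intro z hz
  simp only [not_forall, not_not] at hz
  obtain ⟨m, hm⟩ := hz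
  refine ⟨m, ?_⟩
  have : z * n / θ = (m:ℝ) + 1/2 := by linarith
  field_simp at this ⊢
  linarith

lemma integral_Fq_Icc {θ : ℝ} (hθ : 0 < θ) {n : ℕ} (hn : 1 ≤ n) :
    ∫ z in Icc (0:ℝ) θ, Fq θ n z = θ * θ / 2 := by
  haveI : IsFiniteMeasure (volume.restrict (Icc (0:ℝ) θ)) :=
    ⟨by rw [Measure.restrict_apply_univ, Real.volume_Icc]; exact ENNReal.ofReal_lt_top⟩
  have hint : Integrable (Fq θ n) (volume.restrict (Icc (0:ℝ) θ)) := Fq_integrable hθ n _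
  have hintr : Integrable (fun z => Fq θ n (θ - z)) (volume.restrict (Icc (0:ℝ) θ)) :=
    Fq_reflect_integrable hθ n _
  have hrefl : ∫ z in Icc (0:ℝ) θ, Fq θ n (θ - z) = ∫ z in Icc (0:ℝ) θ, Fq θ n z := by
    rw [← integral_indicator measurableSet_Icc, ← integral_indicator measurableSet_Icc]
    have heq : ∀ z, (Icc (0:ℝ) θ).indicator (fun z => Fq θ n (θ - z)) z
        = ((Icc (0:ℝ) θ).indicator (Fq θ n)) (θ - z) := by
      intro z
      have hmem : θ - z ∈ Icc (0:ℝ) θ ↔ z ∈ Icc (0:ℝ) θ := by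
        simp only [mem_Icc]
        constructor <;> rintro ⟨h1, h2⟩ <;> constructor <;> linarith
      by_cases h : z ∈ Icc (0:ℝ) θ
      · rw [indicator_of_mem h, indicator_of_mem (hmem.2 h)]
      · rw [indicator_of_notMem h, indicator_of_notMem (fun hh => h (hmem.1 hh))]
    simp_rw [heq]
    exact integral_sub_left_eq_self _ _ θ
  have hae : ∀ᵐ z ∂(volume.restrict (Icc (0:ℝ) θ)), Fq θ n z + Fq θ n (θ - z) = θ := by
    filter_upwards [ae_restrict_mem measurableSet_Icc, ae_restrict_of_ae (bad_set_null hθ hn)]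
      with z hz hz'
    exact Fq_add_reflect hθ hn hz hz'
  have h2 : (∫ z in Icc (0:ℝ) θ, Fq θ n z) + ∫ z in Icc (0:ℝ) θ, Fq θ n (θ - z) = θ * θ := by
    rw [← integral_add hint hintr, integral_congr_ae hae, setIntegral_const, measureReal_def,
      Real.volume_Icc, sub_zero, ENNReal.toReal_ofReal hθ.le, smul_eq_mul]
  rw [hrefl] at h2
  linarith

lemma gaussian_integrable_id : Integrable (fun x : ℝ => x) (gaussianReal 0 1) := by
  rw [gaussianReal_of_var_ne_zero _ one_ne_zero,
    integrable_withDensity_iff (measurable_gaussianPDF _ _)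
      (Filter.Eventually.of_forall fun x => ENNReal.ofReal_lt_top)]
  have h : (fun x : ℝ => x * (gaussianPDF 0 1 x).toReal)
      = fun x : ℝ => (Real.sqrt (2 * Real.pi))⁻¹ * (x * Real.exp (-(2⁻¹) * x ^ 2)) := by
    funext x
    rw [gaussianPDF, ENNReal.toReal_ofReal (gaussianPDFReal_nonneg _ _ _), gaussianPDFReal]
    norm_num
    ring_nf
  rw [h]
  exact (integrable_mul_exp_neg_mul_sq (by norm_num)).const_mul _

lemma gaussian_mean_zero : ∫ x : ℝ, x ∂(gaussianReal 0 1) = 0 := by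
  have hmap : (gaussianReal 0 1).map (fun x : ℝ => (-1:ℝ) * x) = gaussianReal 0 1 := by
    rw [gaussianReal_map_const_mul]
    norm_num
  have h := integral_map (φ := fun x : ℝ => (-1:ℝ) * x) (μ := gaussianReal 0 1)
    (measurable_id.const_mul _).aemeasurable
    (f := fun x : ℝ => x) (by rw [hmap]; exact measurable_id.aestronglyMeasurable)
  rw [hmap] at h
  simp only [neg_mul, one_mul] at h
  rw [integral_neg] at h
  linarith

/-- With `z` uniform on `[0, θ]` and `g` standard Gaussian (independent), the expected
conversion error between the ideal SNN average postsynaptic potential at `T` steps and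
the Noisy Quantized activation at step `L` with noise intensity `δ` is zero. -/
theorem nq_zero_expected_conversion_error (θ : ℝ) (hθ : 0 < θ)
    (T L : ℕ) (hT : 1 ≤ T) (hL : 1 ≤ L) (δ : ℝ) :
    ∫ p : ℝ × ℝ,
        (θ * min 1 (max 0 ((1 / (T : ℝ)) * ((⌊p.1 * T / θ + 1 / 2⌋ : ℤ) : ℝ)))
          - θ * min 1 (max 0 ((1 / (L : ℝ)) * ((⌊p.1 * L / θ + 1 / 2⌋ : ℤ) : ℝ)))
          - δ * p.2)
      ∂(((ENNReal.ofReal θ)⁻¹ • volume.restrict (Set.Icc (0 : ℝ) θ)).prod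
          (gaussianReal 0 1)) = 0 := by
  set μ : Measure ℝ := (ENNReal.ofReal θ)⁻¹ • volume.restrict (Set.Icc (0:ℝ) θ) with hμ
  haveI : IsProbabilityMeasure μ := by
    constructor
    rw [hμ, Measure.smul_apply, Measure.restrict_apply_univ, Real.volume_Icc, sub_zero,
      smul_eq_mul, ENNReal.inv_mul_cancel (ENNReal.ofReal_pos.2 hθ).ne' ENNReal.ofReal_ne_top]
  have hbdd : ∀ n : ℕ, Integrable (fun p : ℝ × ℝ => Fq θ n p.1) (μ.prod (gaussianReal 0 1)) := by
    intro n
    refine (integrable_const θ).mono'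
      ((Fq_measurable θ n).comp measurable_fst).aestronglyMeasurable ?_
    filter_upwards with p
    rw [Real.norm_eq_abs, abs_of_nonneg (Fq_bounds hθ n p.1).1]
    exact (Fq_bounds hθ n p.1).2
  have hmapsnd : (μ.prod (gaussianReal 0 1)).map Prod.snd = gaussianReal 0 1 := by
    rw [Measure.map_snd_prod]; simp
  have hmapfst : (μ.prod (gaussianReal 0 1)).map Prod.fst = μ := by
    rw [Measure.map_fst_prod]; simp
  have hsnd : Integrable (fun p : ℝ × ℝ => p.2) (μ.prod (gaussianReal 0 1)) := by
    have h1 : Integrable (fun x : ℝ => x) ((μ.prod (gaussianReal 0 1)).map Prod.snd) := by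
      rw [hmapsnd]; exact gaussian_integrable_id
    exact (integrable_map_measure measurable_id.aestronglyMeasurable
      measurable_snd.aemeasurable).mp h1
  have hδ : Integrable (fun p : ℝ × ℝ => δ * p.2) (μ.prod (gaussianReal 0 1)) :=
    hsnd.const_mul δ
  have hfst : ∀ n : ℕ, 1 ≤ n →
      ∫ p : ℝ × ℝ, Fq θ n p.1 ∂(μ.prod (gaussianReal 0 1)) = θ / 2 := by
    intro n hn
    have h1 : ∫ p : ℝ × ℝ, Fq θ n p.1 ∂(μ.prod (gaussianReal 0 1))
        = ∫ x, Fq θ n x ∂((μ.prod (gaussianReal 0 1)).map Prod.fst) :=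
      (integral_map measurable_fst.aemeasurable
        (Fq_measurable θ n).aestronglyMeasurable).symm
    rw [h1, hmapfst, hμ, integral_smul_measure, integral_Fq_Icc hθ hn, ENNReal.toReal_inv,
      ENNReal.toReal_ofReal hθ.le, smul_eq_mul]
    field_simp
  have hsnd0 : ∫ p : ℝ × ℝ, p.2 ∂(μ.prod (gaussianReal 0 1)) = 0 := by
    have h1 : ∫ p : ℝ × ℝ, p.2 ∂(μ.prod (gaussianReal 0 1))
        = ∫ x : ℝ, x ∂((μ.prod (gaussianReal 0 1)).map Prod.snd) :=
      (integral_map measurable_snd.aemeasurable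
        measurable_id.aestronglyMeasurable).symm
    rw [h1, hmapsnd, gaussian_mean_zero]
  show ∫ p : ℝ × ℝ, (Fq θ T p.1 - Fq θ L p.1 - δ * p.2)
      ∂(μ.prod (gaussianReal 0 1)) = 0
  have hTL : Integrable (fun p : ℝ × ℝ => Fq θ T p.1 - Fq θ L p.1)
      (μ.prod (gaussianReal 0 1)) := by
    exact (hbdd T).sub (hbdd L)
  rw [integral_sub hTL hδ, integral_sub (hbdd T) (hbdd L),
    hfst T hT, hfst L hL, integral_const_mul, hsnd0]
  ring
end
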